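/- If (g(x), f(x)) is an involution in the Riordan group (f∘f = x, g·(g∘f) = 1), then for every natural number n, ((x/f(x))^n · g(x), f(x)) is also an involution in the Riordan group. -/

import Mathlib

open PowerSeries

/-- Composition f ∘ g of formal power series (intended for g with zero constant term). -/
noncomputable def comp (f g : ℚ⟦X⟧) : ℚ⟦X⟧ :=
  PowerSeries.mk fun n => ∑ k ∈ Finset.range (n + 1),
    PowerSeries.coeff k f * PowerSeries.coeff n (g ^ k)

/-- (f(x) - f(0))/x. -/
noncomputable def shift (f : ℚ⟦X⟧) : ℚ⟦X⟧ := PowerSeries.mk fun n => PowerSeries.coeff (n + 1) f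

/-- Action of the almost Riordan array (a; g, f) on a power series b. -/
noncomputable def aact (a g f b : ℚ⟦X⟧) : ℚ⟦X⟧ :=
  PowerSeries.C (PowerSeries.constantCoeff b) * a + PowerSeries.X * g * comp (shift b) f

/-- Product in the group of almost Riordan arrays of order 1 (triples (a; g, f)). -/
noncomputable def amul (M N : ℚ⟦X⟧ × ℚ⟦X⟧ × ℚ⟦X⟧) : ℚ⟦X⟧ × ℚ⟦X⟧ × ℚ⟦X⟧ :=
  (aact M.1 M.2.1 M.2.2 N.1, M.2.1 * comp N.2.1 M.2.2, comp N.2.2 M.2.2)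

/-- Product in the Riordan group (pairs (g, f)). -/
noncomputable def rmul (M N : ℚ⟦X⟧ × ℚ⟦X⟧) : ℚ⟦X⟧ × ℚ⟦X⟧ :=
  (M.1 * comp N.1 M.2, comp N.2 M.2)
open Finset

lemma coeff_pow_eq_zero {f : ℚ⟦X⟧} (hf0 : constantCoeff f = 0) {n k : ℕ} (h : n < k) :
    coeff n (f ^ k) = 0 := by
  have hd : (X : ℚ⟦X⟧) ^ k ∣ f ^ k := pow_dvd_pow_of_dvd (X_dvd_iff.mpr hf0) k
  exact X_pow_dvd_iff.mp hd n h

lemma coeff_comp {a f : ℚ⟦X⟧} (hf0 : constantCoeff f = 0) {n m : ℕ} (h : n < m) :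
    coeff n (comp a f) = ∑ k ∈ range m, coeff k a * coeff n (f ^ k) := by
  rw [comp, coeff_mk]
  refine Finset.sum_subset (Finset.range_subset_range.mpr h) ?_
  intro k hk hnk
  have : n < k := by simp only [mem_range] at hk hnk; omega
  rw [coeff_pow_eq_zero hf0 this, mul_zero]

lemma sum_antidiag_triangle (n : ℕ) (t : ℕ → ℕ → ℚ) (h : ∀ i j, n < i + j → t i j = 0) :
    ∑ k ∈ range (n + 1), ∑ ij ∈ Finset.HasAntidiagonal.antidiagonal k, t ij.1 ij.2
      = ∑ i ∈ range (n + 1), ∑ j ∈ range (n + 1), t i j := by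
  rw [← Finset.sum_product']
  set s := (range (n + 1)) ×ˢ (range (n + 1)) with hs
  set s' := s.filter (fun p => p.1 + p.2 ≤ n) with hs'
  have h1 : ∀ k ∈ range (n + 1),
      (Finset.HasAntidiagonal.antidiagonal k : Finset (ℕ × ℕ)) = s'.filter (fun p => p.1 + p.2 = k) := by
    intro k hk
    rw [mem_range] at hk
    ext p
    simp only [Finset.HasAntidiagonal.mem_antidiagonal, hs', hs, Finset.mem_filter, Finset.mem_product,
      mem_range]
    constructor
    · intro hp; omega
    · intro hp; omega
  rw [Finset.sum_congr rfl (fun k hk => by rw [h1 k hk])]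
  rw [Finset.sum_fiberwise_of_maps_to (fun p hp => by
    simp only [hs', Finset.mem_filter] at hp; exact mem_range.mpr (by omega))]
  refine Finset.sum_subset (Finset.filter_subset _ _) ?_
  intro p hp hnp
  simp only [hs', Finset.mem_filter, not_and] at hnp
  exact h p.1 p.2 (Nat.lt_of_not_le (hnp hp))

lemma comp_one (f : ℚ⟦X⟧) : comp 1 f = 1 := by
  ext n
  rw [comp, coeff_mk]
  rcases Nat.eq_zero_or_pos n with h | h
  · subst h; simp
  · rw [Finset.sum_eq_single 0]
    · simp
    · intro k hk hk0
      rw [coeff_one, if_neg hk0, zero_mul]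
    · simp
    all_goals simp [PowerSeries.coeff_one, Nat.pos_iff_ne_zero.mp h]

lemma comp_X {f : ℚ⟦X⟧} (hf0 : constantCoeff f = 0) : comp X f = f := by
  ext n
  rw [comp, coeff_mk, Finset.sum_eq_single 1]
  · simp
  · intro k hk hk1
    rw [coeff_X, if_neg hk1, zero_mul]
  · intro h1
    simp only [mem_range, not_lt] at h1
    have hn : n = 0 := by omega
    subst hn
    simp [hf0]

set_option maxHeartbeats 1000000 in
lemma comp_mul {a b f : ℚ⟦X⟧} (hf0 : constantCoeff f = 0) :
    comp (a * b) f = comp a f * comp b f := by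
  ext n
  calc coeff n (comp (a * b) f)
      = ∑ k ∈ range (n + 1), coeff k (a * b) * coeff n (f ^ k) :=
        coeff_comp hf0 (Nat.lt_succ_self n)
    _ = ∑ k ∈ range (n + 1), ∑ ij ∈ Finset.HasAntidiagonal.antidiagonal k,
          coeff ij.1 a * coeff ij.2 b * coeff n (f ^ (ij.1 + ij.2)) := by
        refine Finset.sum_congr rfl fun k hk => ?_
        rw [PowerSeries.coeff_mul, Finset.sum_mul]
        refine Finset.sum_congr rfl fun ij hij => ?_
        rw [Finset.HasAntidiagonal.mem_antidiagonal.mp hij]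
    _ = ∑ i ∈ range (n + 1), ∑ j ∈ range (n + 1),
          coeff i a * coeff j b * coeff n (f ^ (i + j)) :=
        sum_antidiag_triangle n
          (fun i j => coeff i a * coeff j b * coeff n (f ^ (i + j)))
          (fun i j h => by simp only [coeff_pow_eq_zero hf0 h, mul_zero])
    _ = coeff n (comp a f * comp b f) := by
        rw [PowerSeries.coeff_mul]
        have step : ∀ pq ∈ Finset.HasAntidiagonal.antidiagonal n,
            coeff pq.1 (comp a f) * coeff pq.2 (comp b f)
              = ∑ i ∈ range (n + 1), ∑ j ∈ range (n + 1),
                  (coeff i a * coeff pq.1 (f ^ i)) *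
                    (coeff j b * coeff pq.2 (f ^ j)) := by
          intro pq hpq
          have hmem := Finset.HasAntidiagonal.mem_antidiagonal.mp hpq
          rw [coeff_comp hf0 (show pq.1 < n + 1 by omega),
            coeff_comp hf0 (show pq.2 < n + 1 by omega), Finset.sum_mul_sum]
        rw [Finset.sum_congr rfl step]
        conv_rhs => rw [Finset.sum_comm]
        refine Finset.sum_congr rfl fun i _ => ?_
        conv_rhs => rw [Finset.sum_comm]
        refine Finset.sum_congr rfl fun j _ => ?_
        rw [pow_add, PowerSeries.coeff_mul, Finset.mul_sum]
        exact Finset.sum_congr rfl fun pq _ => by ring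

lemma comp_pow {a f : ℚ⟦X⟧} (hf0 : constantCoeff f = 0) (m : ℕ) :
    comp (a ^ m) f = (comp a f) ^ m := by
  induction m with
  | zero => simpa using comp_one f
  | succ k ih => rw [pow_succ, comp_mul hf0, ih, pow_succ]

/-- If (g,f) is a Riordan involution, then ((x/f)^n · g, f) is a Riordan involution
for every natural number n. -/
theorem involution_x_div_f_pow (g f : ℚ⟦X⟧)
    (hg0 : PowerSeries.constantCoeff g = 1)
    (hf0 : PowerSeries.constantCoeff f = 0)
    (hff : comp f f = X) (hgg : g * comp g f = 1)
    (n : ℕ) (b : ℚ⟦X⟧) (hb : b * f ^ n = X ^ n * g) :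
    rmul (b, f) (b, f) = (1, X) := by
  have hcompb : comp b f * X ^ n = f ^ n * comp g f := by
    have h1 : comp (b * f ^ n) f = comp (X ^ n * g) f := by rw [hb]
    rwa [comp_mul hf0, comp_mul hf0, comp_pow hf0, comp_pow hf0, hff, comp_X hf0] at h1
  have hfne : f ≠ 0 := by
    intro h
    rw [h] at hff
    have h2 := congrArg (coeff 1) hff
    simp [comp] at h2
  have hXf : (X : ℚ⟦X⟧) ^ n * f ^ n ≠ 0 :=
    mul_ne_zero (pow_ne_zero _ X_ne_zero) (pow_ne_zero _ hfne)
  have key : b * comp b f * (X ^ n * f ^ n) = 1 * (X ^ n * f ^ n) := by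
    calc b * comp b f * (X ^ n * f ^ n) = (b * f ^ n) * (comp b f * X ^ n) := by ring
    _ = (X ^ n * g) * (f ^ n * comp g f) := by rw [hb, hcompb]
    _ = (g * comp g f) * (X ^ n * f ^ n) := by ring
    _ = 1 * (X ^ n * f ^ n) := by rw [hgg]
  have hb1 : b * comp b f = 1 := mul_right_cancel₀ hXf key
  simp [rmul, hb1, hff]
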